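/- Let G be a (P6, diamond)-free graph containing an induced 5-cycle v1v2v3v4v5, and for each i let A_i be the set of vertices outside the cycle whose only neighbour on the cycle is v_i. Then A_i is complete to A_{i+2}: every vertex of A_i is adjacent to every vertex of A_{i+2} (indices modulo 5). -/

import Mathlib

open SimpleGraph

def diamond : SimpleGraph (Fin 4) := (⊤ : SimpleGraph (Fin 4)).deleteEdges {s(0, 1)}

set_option maxHeartbeats 1000000 in
theorem stmt_3 {V : Type*} (G : SimpleGraph V)
    (hP6 : ¬ Nonempty (pathGraph 6 ↪g G))
    (hD : ¬ Nonempty (diamond ↪g G))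
    (v : Fin 5 → V) (hv : Function.Injective v)
    (hC5 : ∀ i j, G.Adj (v i) (v j) ↔ j = i + 1 ∨ i = j + 1)
    (A : Fin 5 → Set V)
    (hA : ∀ i, A i = {u | u ∉ Set.range v ∧ ∀ j, G.Adj u (v j) ↔ j = i}) :
    ∀ i, ∀ a ∈ A i, ∀ b ∈ A (i + 2), G.Adj a b := by
  intro i a ha b hb
  rw [hA] at ha hb
  obtain ⟨har, haj⟩ := ha
  obtain ⟨hbr, hbj⟩ := hb
  by_contra hab
  set w : Fin 5 → V := fun c => v (i + c) with hw
  have key : ∀ c d : Fin 5, i + c = i + d ↔ c = d :=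
    fun c d => ⟨fun h => add_left_cancel h, fun h => by rw [h]⟩
  have hww : ∀ c d : Fin 5, w c = w d ↔ c = d :=
    fun c d => ⟨fun h => (key c d).mp (hv h), fun h => by rw [h]⟩
  have hvv : ∀ c d : Fin 5, G.Adj (w c) (w d) ↔ d = c + 1 ∨ c = d + 1 := by
    intro c d
    rw [hw]
    simp only
    rw [hC5, add_assoc, add_assoc, key, key]
  have haj' : ∀ c : Fin 5, G.Adj a (w c) ↔ c = 0 := by
    intro c
    rw [hw]; simp only; rw [haj]
    constructor
    · intro h; have := key c 0; rw [add_zero] at this; exact this.mp h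
    · intro h; rw [h, add_zero]
  have hbj' : ∀ c : Fin 5, G.Adj b (w c) ↔ c = 2 := by
    intro c
    rw [hw]; simp only; rw [hbj]; exact key c 2
  have haj'' : ∀ c : Fin 5, G.Adj (w c) a ↔ c = 0 := by
    intro c; rw [G.adj_comm]; exact haj' c
  have hbj'' : ∀ c : Fin 5, G.Adj (w c) b ↔ c = 2 := by
    intro c; rw [G.adj_comm]; exact hbj' c
  have hba : ¬ G.Adj b a := fun h => hab h.symm
  have hav : ∀ c : Fin 5, a ≠ w c := fun c h => har ⟨i+c, h.symm⟩
  have hva : ∀ c : Fin 5, w c ≠ a := fun c h => hav c h.symm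
  have hbv : ∀ c : Fin 5, b ≠ w c := fun c h => hbr ⟨i+c, h.symm⟩
  have hvb : ∀ c : Fin 5, w c ≠ b := fun c h => hbv c h.symm
  have hab' : a ≠ b := by
    intro h
    have h1 : G.Adj a (w 0) := (haj' 0).mpr rfl
    rw [h, hbj' 0] at h1
    exact absurd h1 (by decide)
  have hba' : b ≠ a := fun h => hab' h.symm
  have e5 : (![a, w 0, w 4, w 3, w 2, b] : Fin 6 → V) 5 = b := rfl
  apply hP6
  refine ⟨⟨⟨![a, w 0, w 4, w 3, w 2, b], ?_⟩, ?_⟩⟩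
  · intro x y
    fin_cases x <;> fin_cases y <;>
      simp [e5, hww, hav, hva, hbv, hvb, hab', hba'] <;> decide
  · intro x y
    show G.Adj (![a, w 0, w 4, w 3, w 2, b] x) (![a, w 0, w 4, w 3, w 2, b] y) ↔ (pathGraph 6).Adj x y
    fin_cases x <;> fin_cases y <;>
      simp [e5, pathGraph_adj, hvv, haj', hbj', haj'', hbj'', hab, hba,
        SimpleGraph.irrefl] <;>
      decide
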